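/- arXiv:math/0405297 — 3 statements merged into one kernel-verified Lean document; each statement's English description precedes it below -/
import Mathlib

section
/- Let ς be a real random variable with a density that is symmetric about 0, continuous, and nonincreasing on [0,∞). Then for every c ∈ ℝ and a > 0, P(|ς + c| ≤ a) ≤ P(|ς| ≤ a). -/
open MeasureTheory Set

private lemma and_refl_lemma (p : ℝ → ℝ) (hsymm : ∀ x, p (-x) = p x) (α β : ℝ) :
    ∫⁻ x in Icc α β, ENNReal.ofReal (p x) = ∫⁻ x in Icc (-β) (-α), ENNReal.ofReal (p x) := by
  have h := (Measure.measurePreserving_neg (volume : Measure ℝ)).setLIntegral_comp_preimage_emb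
    (MeasurableEquiv.neg ℝ).measurableEmbedding (fun x => ENNReal.ofReal (p x)) (Icc α β)
  have hpre : (Neg.neg : ℝ → ℝ) ⁻¹' Icc α β = Icc (-β) (-α) := by
    ext x; simp [mem_Icc, neg_le, le_neg, and_comm]
  rw [hpre] at h
  simp only [hsymm] at h
  exact h.symm

private lemma and_trans_lemma (p : ℝ → ℝ) (α β c : ℝ) :
    ∫⁻ x in Icc α β, ENNReal.ofReal (p x)
      = ∫⁻ x in Icc (α - c) (β - c), ENNReal.ofReal (p (x + c)) := by
  have h := (measurePreserving_add_right (volume : Measure ℝ) c).setLIntegral_comp_preimage_emb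
    (MeasurableEquiv.addRight c).measurableEmbedding (fun x => ENNReal.ofReal (p x)) (Icc α β)
  rw [preimage_add_const_Icc] at h
  exact h.symm

private lemma and_split_lemma (p : ℝ → ℝ) {α β γ : ℝ} (h1 : α ≤ β) (h2 : β ≤ γ) :
    ∫⁻ x in Icc α γ, ENNReal.ofReal (p x)
      = (∫⁻ x in Icc α β, ENNReal.ofReal (p x)) + ∫⁻ x in Icc β γ, ENNReal.ofReal (p x) := by
  have hu : Icc α β ∪ Ioc β γ = Icc α γ := Icc_union_Ioc_eq_Icc h1 h2
  have hd : Disjoint (Icc α β) (Ioc β γ) := by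
    rw [Set.disjoint_left]
    rintro x ⟨_, hx2⟩ ⟨hx3, _⟩
    exact absurd hx2 (not_le.2 hx3)
  rw [← hu, lintegral_union measurableSet_Ioc hd,
    Measure.restrict_congr_set Ioc_ae_eq_Icc]

private lemma and_comp_lemma (p : ℝ → ℝ) (hsymm : ∀ x, p (-x) = p x)
    (hmono : AntitoneOn p (Ici 0)) {x y : ℝ} (h : |x| ≤ |y|) : p y ≤ p x := by
  have hx : p x = p |x| := by
    rcases abs_cases x with ⟨e, _⟩ | ⟨e, _⟩ <;> rw [e]
    rw [hsymm]
  have hy : p y = p |y| := by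
    rcases abs_cases y with ⟨e, _⟩ | ⟨e, _⟩ <;> rw [e]
    rw [hsymm]
  rw [hx, hy]
  exact hmono (mem_Ici.2 (abs_nonneg x)) (mem_Ici.2 (abs_nonneg y)) h

private lemma and_key_lemma (p : ℝ → ℝ) (hsymm : ∀ x, p (-x) = p x)
    (hcont : Continuous p) (hmono : AntitoneOn p (Ici 0))
    {a c : ℝ} (ha : 0 < a) (hc : 0 ≤ c) :
    ∫⁻ x in Icc (-a - c) (a - c), ENNReal.ofReal (p x)
      ≤ ∫⁻ x in Icc (-a) a, ENNReal.ofReal (p x) := by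
  have hm : Measurable fun x => ENNReal.ofReal (p x) := hcont.measurable.ennreal_ofReal
  rcases le_or_gt c (2 * a) with hca | hca
  · -- small shift: split
    have e1 := and_split_lemma p (show -a - c ≤ -a by linarith) (show -a ≤ a - c by linarith)
    have e2 := and_split_lemma p (show -a ≤ a - c by linarith) (show a - c ≤ a by linarith)
    rw [show -a - c = -a - c from rfl] at e1
    have key : ∫⁻ x in Icc (-a - c) (-a), ENNReal.ofReal (p x)
        ≤ ∫⁻ x in Icc (a - c) a, ENNReal.ofReal (p x) := by
      have e3 : ∫⁻ x in Icc (-a - c) (-a), ENNReal.ofReal (p x)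
          = ∫⁻ x in Icc a (a + c), ENNReal.ofReal (p x) := by
        have := and_refl_lemma p hsymm (-a - c) (-a)
        rw [this, show -(-a) = a by ring, show -(-a - c) = a + c by ring]
      have e4 : ∫⁻ x in Icc a (a + c), ENNReal.ofReal (p x)
          = ∫⁻ x in Icc (a - c) a, ENNReal.ofReal (p (x + c)) := by
        have := and_trans_lemma p a (a + c) c
        rw [this, show a + c - c = a by ring]
      rw [e3, e4]
      refine setLIntegral_mono hm fun x hx => ?_
      refine ENNReal.ofReal_le_ofReal (and_comp_lemma p hsymm hmono ?_)
      rcases hx with ⟨hx1, hx2⟩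
      rcases abs_cases x with ⟨e, he⟩ | ⟨e, he⟩ <;>
        rcases abs_cases (x + c) with ⟨e', he'⟩ | ⟨e', he'⟩ <;> rw [e, e'] <;> linarith
    calc ∫⁻ x in Icc (-a - c) (a - c), ENNReal.ofReal (p x)
        = (∫⁻ x in Icc (-a - c) (-a), ENNReal.ofReal (p x))
          + ∫⁻ x in Icc (-a) (a - c), ENNReal.ofReal (p x) := e1
      _ ≤ (∫⁻ x in Icc (a - c) a, ENNReal.ofReal (p x))
          + ∫⁻ x in Icc (-a) (a - c), ENNReal.ofReal (p x) := add_le_add_left key _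
      _ = ∫⁻ x in Icc (-a) a, ENNReal.ofReal (p x) := by rw [e2, add_comm]
  · -- large shift: translate whole interval
    have e5 : ∫⁻ x in Icc (-a - c) (a - c), ENNReal.ofReal (p x)
        = ∫⁻ x in Icc (-a) a, ENNReal.ofReal (p (x + -c)) := by
      have := and_trans_lemma p (-a - c) (a - c) (-c)
      rw [this, show -a - c - -c = -a by ring, show a - c - -c = a by ring]
    rw [e5]
    refine setLIntegral_mono hm fun x hx => ?_
    refine ENNReal.ofReal_le_ofReal (and_comp_lemma p hsymm hmono ?_)
    rcases hx with ⟨hx1, hx2⟩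
    rcases abs_cases x with ⟨e, he⟩ | ⟨e, he⟩ <;>
      rcases abs_cases (x + -c) with ⟨e', he'⟩ | ⟨e', he'⟩ <;> rw [e, e'] <;> linarith

/-- **Anderson's inequality** in dimension one: if `ς` is a real random variable with a
density that is symmetric about `0`, continuous, and nonincreasing on `[0, ∞)`, then for
every `c ∈ ℝ` and `a > 0`, `P(|ς + c| ≤ a) ≤ P(|ς| ≤ a)`. -/
theorem anderson_inequality_dim_one
    {Ω : Type*} [MeasurableSpace Ω] (ℙ : Measure Ω) [IsProbabilityMeasure ℙ]
    (ς : Ω → ℝ) (hς : Measurable ς) (p : ℝ → ℝ)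
    (hdens : Measure.map ς ℙ = volume.withDensity (fun x => ENNReal.ofReal (p x)))
    (hnonneg : ∀ x, 0 ≤ p x)
    (hsymm : ∀ x, p (-x) = p x)
    (hcont : Continuous p)
    (hmono : AntitoneOn p (Ici 0)) :
    ∀ (c : ℝ) (a : ℝ), 0 < a →
      ℙ {ω | |ς ω + c| ≤ a} ≤ ℙ {ω | |ς ω| ≤ a} := by
  intro c a ha
  have hset1 : {ω | |ς ω + c| ≤ a} = ς ⁻¹' Icc (-a - c) (a - c) := by
    ext ω
    simp only [mem_setOf_eq, mem_preimage, mem_Icc, abs_le]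
    constructor <;> rintro ⟨h1, h2⟩ <;> constructor <;> linarith
  have hset2 : {ω | |ς ω| ≤ a} = ς ⁻¹' Icc (-a) a := by
    ext ω
    simp only [mem_setOf_eq, mem_preimage, mem_Icc, abs_le]
  have happ : ∀ α β : ℝ, ℙ (ς ⁻¹' Icc α β) = ∫⁻ x in Icc α β, ENNReal.ofReal (p x) := by
    intro α β
    rw [← Measure.map_apply hς measurableSet_Icc, hdens,
      withDensity_apply _ measurableSet_Icc]
  rw [hset1, hset2, happ, happ]
  rcases le_or_gt 0 c with hc | hc
  · exact and_key_lemma p hsymm hcont hmono ha hc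
  · have e := and_refl_lemma p hsymm (-a - c) (a - c)
    rw [e, show -(a - c) = -a - -c by ring, show -(-a - c) = a - -c by ring]
    exact and_key_lemma p hsymm hcont hmono ha (by linarith)
end

section
/- If X and Y are independent real random variables, each having a density that is symmetric about 0 and nonincreasing on [0,∞), then X + Y has a density that is symmetric about 0 and nonincreasing on [0,∞). -/
open MeasureTheory Set ProbabilityTheory
open scoped ENNReal

set_option maxHeartbeats 1000000

section WintnerAux

/-- An even function that is antitone on `[0, ∞)` is measurable. -/
lemma meas_of_even_anti {p : ℝ → ℝ} (hsymm : ∀ x, p (-x) = p x)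
    (hmono : AntitoneOn p (Ici 0)) : Measurable p := by
  have habs : ∀ x, p |x| = p x := by
    intro x
    rcases abs_choice x with h | h
    · rw [h]
    · rw [h, hsymm]
  have hA : Antitone (fun x => p (max x 0)) := by
    intro x y hxy
    exact hmono (le_max_right x 0) (le_max_right y 0) (max_le_max hxy le_rfl)
  have : p = (fun x => p (max x 0)) ∘ (fun x => |x|) := by
    funext x
    simp [max_eq_left (abs_nonneg x), habs]
  rw [this]
  exact hA.measurable.comp measurable_abs

/-- An even function antitone on `[0, ∞)` attains its max at `0`. -/
lemma even_le_zero {p : ℝ → ℝ} (hsymm : ∀ x, p (-x) = p x)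
    (hmono : AntitoneOn p (Ici 0)) (x : ℝ) : p x ≤ p 0 := by
  have habs : p |x| = p x := by
    rcases abs_choice x with h | h
    · rw [h]
    · rw [h, hsymm]
  rw [← habs]
  exact hmono self_mem_Ici (abs_nonneg x) (abs_nonneg x)

/-- For an even function antitone on `[0, ∞)`, values decrease with `|·|`. -/
lemma even_anti_abs {p : ℝ → ℝ} (hsymm : ∀ x, p (-x) = p x)
    (hmono : AntitoneOn p (Ici 0)) {u v : ℝ} (h : |u| ≤ |v|) : p v ≤ p u := by
  have habs : ∀ x, p |x| = p x := by
    intro x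
    rcases abs_choice x with h | h
    · rw [h]
    · rw [h, hsymm]
  rw [← habs u, ← habs v]
  exact hmono (abs_nonneg u) (abs_nonneg v) h

/-- The image of a product of densities under addition is given by the convolution density. -/
lemma conv_withDensity {F G : ℝ → ℝ≥0∞} (hF : Measurable F) (hG : Measurable G) :
    Measure.map (fun z : ℝ × ℝ => z.1 + z.2)
      ((volume.withDensity F).prod (volume.withDensity G))
    = volume.withDensity (fun z => ∫⁻ y, F (z - y) * G y) := by
  have haddm : Measurable (fun z : ℝ × ℝ => z.1 + z.2) :=
    measurable_fst.add measurable_snd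
  ext s hs
  rw [Measure.map_apply haddm hs, withDensity_apply _ hs]
  set t : Set (ℝ × ℝ) := (fun z : ℝ × ℝ => z.1 + z.2) ⁻¹' s with ht_def
  have ht : MeasurableSet t := haddm hs
  rw [Measure.prod_apply ht]
  have hmeas : Measurable fun x => (volume.withDensity G) (Prod.mk x ⁻¹' t) :=
    measurable_measure_prodMk_left ht
  rw [lintegral_withDensity_eq_lintegral_mul _ hF hmeas]
  have hstep : ∀ x : ℝ, (F * fun x => (volume.withDensity G) (Prod.mk x ⁻¹' t)) x
      = ∫⁻ z in s, F x * G (z - x) := by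
    intro x
    have hpre : Prod.mk x ⁻¹' t = (fun y => x + y) ⁻¹' s := rfl
    have hmp : MeasurePreserving (fun y : ℝ => x + y) volume volume :=
      measurePreserving_add_left volume x
    have hemb : MeasurableEmbedding (fun y : ℝ => x + y) :=
      (MeasurableEquiv.addLeft x).measurableEmbedding
    have key := hmp.setLIntegral_comp_preimage_emb hemb (fun z => G (z - x)) s
    simp only [add_sub_cancel_left] at key
    have : (volume.withDensity G) (Prod.mk x ⁻¹' t) = ∫⁻ z in s, G (z - x) := by
      rw [hpre, withDensity_apply _ (hmp.measurable hs), key]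
    rw [Pi.mul_apply, this,
      ← lintegral_const_mul (μ := volume.restrict s) (F x)
        (f := fun z => G (z - x)) (by measurability)]
  rw [lintegral_congr hstep]
  rw [lintegral_lintegral_swap]
  · refine setLIntegral_congr_fun hs (fun z _ => ?_)
    have hmp : MeasurePreserving (fun y : ℝ => z - y) volume volume :=
      Measure.measurePreserving_sub_left volume z
    calc (∫⁻ x, F x * G (z - x))
        = ∫⁻ y, (fun x => F x * G (z - x)) ((fun y => z - y) y) :=
          (hmp.lintegral_comp (hF.mul (hG.comp (measurable_const.sub measurable_id)))).symm
      _ = ∫⁻ y, F (z - y) * G y := by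
          refine lintegral_congr fun y => ?_
          simp
  · exact ((hF.comp measurable_fst).mul
      (hG.comp (measurable_snd.sub measurable_fst))).aemeasurable

/-- The convolution of two even densities is even. -/
lemma R_symm {p q : ℝ → ℝ}
    (hpsymm : ∀ x, p (-x) = p x) (hqsymm : ∀ x, q (-x) = q x)
    (hpm : Measurable p) (hqm : Measurable q) (z : ℝ) :
    (∫⁻ y, ENNReal.ofReal (p (-z - y)) * ENNReal.ofReal (q y))
      = ∫⁻ y, ENNReal.ofReal (p (z - y)) * ENNReal.ofReal (q y) := by
  have hF : Measurable fun x => ENNReal.ofReal (p x) := hpm.ennreal_ofReal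
  have hG : Measurable fun x => ENNReal.ofReal (q x) := hqm.ennreal_ofReal
  have hmp : MeasurePreserving (fun y : ℝ => -y) volume volume :=
    Measure.measurePreserving_neg volume
  have h2 := hmp.lintegral_comp
    (f := fun y => ENNReal.ofReal (p (-z - y)) * ENNReal.ofReal (q y))
    ((hF.comp (measurable_const.sub measurable_id)).mul hG)
  rw [← h2]
  refine lintegral_congr fun y => ?_
  rw [show -z - -y = -(z - y) by ring, hpsymm, hqsymm]

/-- Wintner: the convolution of two even densities, each antitone on `[0, ∞)`,
is antitone on `[0, ∞)`. -/
lemma R_anti {p q : ℝ → ℝ}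
    (hp0 : ∀ x, 0 ≤ p x) (hq0 : ∀ x, 0 ≤ q x)
    (hpsymm : ∀ x, p (-x) = p x) (hqsymm : ∀ x, q (-x) = q x)
    (hpmono : AntitoneOn p (Ici 0)) (hqmono : AntitoneOn q (Ici 0))
    (hpm : Measurable p) (hqm : Measurable q) :
    AntitoneOn (fun z => ∫⁻ y, ENNReal.ofReal (p (z - y)) * ENNReal.ofReal (q y)) (Ici 0) := by
  have hF : Measurable fun x => ENNReal.ofReal (p x) := hpm.ennreal_ofReal
  have hG : Measurable fun x => ENNReal.ofReal (q x) := hqm.ennreal_ofReal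
  intro a ha b hb hab
  simp only
  have ha0 : (0:ℝ) ≤ a := ha
  have hb0 : (0:ℝ) ≤ b := hb
  obtain ⟨m, d, hm0, hd0, hma, hmb⟩ :
      ∃ m d : ℝ, 0 ≤ m ∧ 0 ≤ d ∧ a = m - d ∧ b = m + d :=
    ⟨(a + b) / 2, (b - a) / 2, by linarith, by linarith, by ring, by ring⟩
  -- step 1: reparametrize
  have step1 : ∀ x : ℝ, (∫⁻ y, ENNReal.ofReal (p (x - y)) * ENNReal.ofReal (q y))
      = ∫⁻ s, ENNReal.ofReal (p (x - m + s)) * ENNReal.ofReal (q (m - s)) := by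
    intro x
    have hmp : MeasurePreserving (fun s : ℝ => m - s) volume volume :=
      Measure.measurePreserving_sub_left volume m
    have h2 := hmp.lintegral_comp
      (f := fun y => ENNReal.ofReal (p (x - y)) * ENNReal.ofReal (q y))
      ((hF.comp (measurable_const.sub measurable_id)).mul hG)
    rw [← h2]
    refine lintegral_congr fun s => ?_
    rw [show x - (m - s) = x - m + s by ring]
  -- step 2: fold the negative half-line onto the positive one
  have fold : ∀ Φ : ℝ → ℝ≥0∞, Measurable Φ →
      (∫⁻ s, Φ s) = ∫⁻ s in Ici 0, (Φ s + Φ (-s)) := by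
    intro Φ hΦ
    rw [← lintegral_add_compl Φ measurableSet_Ici, compl_Ici]
    have hnegmp : MeasurePreserving (fun s : ℝ => -s) volume volume :=
      Measure.measurePreserving_neg volume
    have hnegemb : MeasurableEmbedding (fun s : ℝ => -s) :=
      (Homeomorph.neg ℝ).measurableEmbedding
    have key := hnegmp.setLIntegral_comp_preimage_emb hnegemb Φ (Iio 0)
    have hpre : (fun s : ℝ => -s) ⁻¹' (Iio 0) = Ioi 0 := by
      ext x
      simp only [mem_preimage, mem_Iio, mem_Ioi, neg_lt_zero]
    rw [hpre] at key
    rw [← key, setLIntegral_congr (Ioi_ae_eq_Ici (a := (0:ℝ))),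
      lintegral_add_left (hΦ.mono le_rfl le_rfl) _]
  -- step 3: pointwise rearrangement inequality on `[0, ∞)`
  have ptwise : ∀ s ∈ Ici (0:ℝ),
      ENNReal.ofReal (p (b - m + s)) * ENNReal.ofReal (q (m - s))
        + ENNReal.ofReal (p (b - m + -s)) * ENNReal.ofReal (q (m - -s))
      ≤ ENNReal.ofReal (p (a - m + s)) * ENNReal.ofReal (q (m - s))
        + ENNReal.ofReal (p (a - m + -s)) * ENNReal.ofReal (q (m - -s)) := by
    intro s hs
    have hs0 : (0:ℝ) ≤ s := hs
    have e1 : b - m + s = s + d := by rw [hmb]; ring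
    have e2 : b - m + -s = -(s - d) := by rw [hmb]; ring
    have e3 : a - m + s = s - d := by rw [hma]; ring
    have e4 : a - m + -s = -(s + d) := by rw [hma]; ring
    have e5 : m - -s = m + s := by ring
    rw [e1, e2, e3, e4, e5, hpsymm, hpsymm]
    have hBA : p (s + d) ≤ p (s - d) := by
      refine even_anti_abs hpsymm hpmono ?_
      rw [abs_of_nonneg (by linarith : (0:ℝ) ≤ s + d)]
      exact abs_le.mpr ⟨by linarith, by linarith⟩
    have hDC : q (m + s) ≤ q (m - s) := by
      refine even_anti_abs hqsymm hqmono ?_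
      rw [abs_of_nonneg (by linarith : (0:ℝ) ≤ m + s)]
      exact abs_le.mpr ⟨by linarith, by linarith⟩
    rw [← ENNReal.ofReal_mul (hp0 _), ← ENNReal.ofReal_mul (hp0 _),
      ← ENNReal.ofReal_mul (hp0 _), ← ENNReal.ofReal_mul (hp0 _),
      ← ENNReal.ofReal_add (mul_nonneg (hp0 _) (hq0 _)) (mul_nonneg (hp0 _) (hq0 _)),
      ← ENNReal.ofReal_add (mul_nonneg (hp0 _) (hq0 _)) (mul_nonneg (hp0 _) (hq0 _))]
    apply ENNReal.ofReal_le_ofReal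
    nlinarith [mul_nonneg (sub_nonneg.2 hBA) (sub_nonneg.2 hDC), hq0 (m - s), hq0 (m + s),
      hp0 (s - d), hp0 (s + d)]
  -- assemble
  have hΦ : ∀ x : ℝ, Measurable fun s : ℝ =>
      ENNReal.ofReal (p (x - m + s)) * ENNReal.ofReal (q (m - s)) := fun x =>
    (hF.comp (measurable_const.add measurable_id)).mul
      (hG.comp (measurable_const.sub measurable_id))
  rw [step1 a, step1 b, fold _ (hΦ a), fold _ (hΦ b)]
  exact setLIntegral_mono' measurableSet_Ici ptwise

end WintnerAux

/-- If `X` and `Y` are independent real random variables, each having a density that is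
symmetric about `0` and nonincreasing on `[0, ∞)`, then `X + Y` has a density that is
symmetric about `0` and nonincreasing on `[0, ∞)`. -/
theorem sum_indep_symm_unimodal_density
    {Ω : Type*} [MeasurableSpace Ω] (P : Measure Ω) [IsProbabilityMeasure P]
    (X Y : Ω → ℝ) (hX : Measurable X) (hY : Measurable Y)
    (hindep : IndepFun X Y P)
    (p q : ℝ → ℝ)
    (hp : Measure.map X P = volume.withDensity (fun x => ENNReal.ofReal (p x)))
    (hq : Measure.map Y P = volume.withDensity (fun x => ENNReal.ofReal (q x)))
    (hp0 : ∀ x, 0 ≤ p x) (hq0 : ∀ x, 0 ≤ q x)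
    (hpsymm : ∀ x, p (-x) = p x) (hqsymm : ∀ x, q (-x) = q x)
    (hpmono : AntitoneOn p (Ici 0)) (hqmono : AntitoneOn q (Ici 0)) :
    ∃ r : ℝ → ℝ, (∀ x, 0 ≤ r x) ∧
      Measure.map (fun ω => X ω + Y ω) P
        = volume.withDensity (fun x => ENNReal.ofReal (r x)) ∧
      (∀ x, r (-x) = r x) ∧ AntitoneOn r (Ici 0) := by
  have hpm : Measurable p := meas_of_even_anti hpsymm hpmono
  have hqm : Measurable q := meas_of_even_anti hqsymm hqmono
  set R : ℝ → ℝ≥0∞ :=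
    fun z => ∫⁻ y, ENNReal.ofReal (p (z - y)) * ENNReal.ofReal (q y) with hR_def
  -- the law of the sum is `volume.withDensity R`
  have hmaplaw : Measure.map (fun ω => X ω + Y ω) P = volume.withDensity R := by
    have hpair : Measure.map (fun ω => (X ω, Y ω)) P
        = (Measure.map X P).prod (Measure.map Y P) :=
      (indepFun_iff_map_prod_eq_prod_map_map hX.aemeasurable hY.aemeasurable).mp hindep
    have hcomp : Measure.map (fun ω => X ω + Y ω) P
        = Measure.map (fun z : ℝ × ℝ => z.1 + z.2) (Measure.map (fun ω => (X ω, Y ω)) P) := by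
      rw [Measure.map_map (g := fun z : ℝ × ℝ => z.1 + z.2) (measurable_fst.add measurable_snd) (hX.prodMk hY)]
      rfl
    rw [hcomp, hpair, hp, hq, conv_withDensity hpm.ennreal_ofReal hqm.ennreal_ofReal]
  -- the total mass of `q` is `1`
  have hq1 : (∫⁻ y, ENNReal.ofReal (q y)) = 1 := by
    have hprob : IsProbabilityMeasure (Measure.map Y P) :=
      Measure.isProbabilityMeasure_map hY.aemeasurable
    calc (∫⁻ y, ENNReal.ofReal (q y))
        = volume.withDensity (fun x => ENNReal.ofReal (q x)) univ := by
          rw [withDensity_apply _ MeasurableSet.univ, Measure.restrict_univ]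
      _ = (Measure.map Y P) univ := by rw [hq]
      _ = 1 := measure_univ
  -- `R` is finite everywhere
  have hfin : ∀ z, R z ≠ ⊤ := by
    intro z
    have hb : R z ≤ ENNReal.ofReal (p 0) * 1 := by
      rw [← hq1, ← lintegral_const_mul _ hqm.ennreal_ofReal]
      exact lintegral_mono fun y => mul_le_mul_left
        (ENNReal.ofReal_le_ofReal (even_le_zero hpsymm hpmono _)) _
    exact ne_top_of_le_ne_top (by simp) hb
  refine ⟨fun z => (R z).toReal, fun z => ENNReal.toReal_nonneg, ?_, ?_, ?_⟩
  · rw [hmaplaw]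
    congr 1
    funext z
    exact (ENNReal.ofReal_toReal (hfin z)).symm
  · intro x
    exact congrArg ENNReal.toReal (R_symm hpsymm hqsymm hpm hqm x)
  · intro a ha b hb hab
    exact ENNReal.toReal_mono (hfin a)
      (R_anti hp0 hq0 hpsymm hqsymm hpmono hqmono hpm hqm ha hb hab)
end

section
/- Let A_1, A_2, … be i.i.d. random q×q matrices with E(A_1 ⊗ A_1) having all eigenvalues of modulus less than one, where ⊗ is the Kronecker product. Then there exist constants c > 0 and γ > 0 such that E‖A_1⋯A_n‖² ≤ c e^{−γn} for all n. -/
open MeasureTheory Set Filter ProbabilityTheory Kronecker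

noncomputable instance {m n α : Type*} [MeasurableSpace α] :
    MeasurableSpace (Matrix m n α) := MeasurableSpace.pi

/-- The Frobenius norm of a real matrix, `‖A‖² = tr (A Aᵀ)`. -/
noncomputable def frobNorm {q : ℕ} (A : Matrix (Fin q) (Fin q) ℝ) : ℝ :=
  Real.sqrt (∑ i, ∑ j, (A i j) ^ 2)

/-- The ordered product `A_1 ⋯ A_n` of the first `n` matrices of the sequence. -/
noncomputable def matProd {Ω : Type*} {q : ℕ} (A : ℕ → Ω → Matrix (Fin q) (Fin q) ℝ)
    (n : ℕ) (ω : Ω) : Matrix (Fin q) (Fin q) ℝ :=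
  ((List.range n).map (fun i => A i ω)).prod

section Aux

variable {Ω : Type*} [MeasurableSpace Ω] {q : ℕ}

lemma measurable_matrix_entry {m n : Type*} {X : Ω → Matrix m n ℝ} (hX : Measurable X)
    (i : m) (j : n) : Measurable fun ω => X ω i j :=
  (measurable_pi_apply j).comp ((measurable_pi_apply i).comp hX)

lemma measurable_matrix_mul {X Y : Ω → Matrix (Fin q) (Fin q) ℝ}
    (hX : Measurable X) (hY : Measurable Y) : Measurable (fun ω => X ω * Y ω) := by
  refine measurable_pi_lambda _ fun i => measurable_pi_lambda _ fun j => ?_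
  have h : (fun ω => (X ω * Y ω) i j) = fun ω => ∑ k, X ω i k * Y ω k j := by
    funext ω; simp [Matrix.mul_apply]
  rw [h]
  exact Finset.measurable_sum _ fun k _ =>
    (measurable_matrix_entry hX i k).mul (measurable_matrix_entry hY k j)

lemma measurable_kron_self : Measurable
    (fun B : Matrix (Fin q) (Fin q) ℝ => B ⊗ₖ B) := by
  refine measurable_pi_lambda _ fun i => measurable_pi_lambda _ fun j => ?_
  have h : (fun B : Matrix (Fin q) (Fin q) ℝ => (B ⊗ₖ B) i j)
      = fun B => B i.1 j.1 * B i.2 j.2 := by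
    funext B; simp [Matrix.kroneckerMap_apply]
  rw [h]
  exact (measurable_matrix_entry measurable_id _ _).mul (measurable_matrix_entry measurable_id _ _)

lemma matProd_zero (A : ℕ → Ω → Matrix (Fin q) (Fin q) ℝ) (ω : Ω) :
    matProd A 0 ω = 1 := by simp [matProd]

lemma matProd_succ (A : ℕ → Ω → Matrix (Fin q) (Fin q) ℝ) (n : ℕ) (ω : Ω) :
    matProd A (n + 1) ω = matProd A n ω * A n ω := by
  simp [matProd, List.range_succ]

lemma measurable_listprod (n : ℕ) :
    Measurable fun x : ℕ → Matrix (Fin q) (Fin q) ℝ => ((List.range n).map x).prod := by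
  induction n with
  | zero => simpa using measurable_const
  | succ n ih =>
      have h : (fun x : ℕ → Matrix (Fin q) (Fin q) ℝ => ((List.range (n+1)).map x).prod)
          = fun x => ((List.range n).map x).prod * x n := by
        funext x; simp [List.range_succ]
      rw [h]
      exact measurable_matrix_mul ih (measurable_pi_apply n)

lemma indepFun_matProd {P : Measure Ω} (A : ℕ → Ω → Matrix (Fin q) (Fin q) ℝ)
    (hmeas : ∀ i, Measurable (A i))
    (hindep : iIndepFun A P) (n : ℕ) :
    IndepFun (matProd A n) (A n) P := by
  classical
  have h := hindep.indepFun_finset (Finset.range n) {n}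
    (by simp [Finset.disjoint_singleton_right]) hmeas
  let ext : (∀ _ : (Finset.range n : Finset ℕ), Matrix (Fin q) (Fin q) ℝ) →
      ℕ → Matrix (Fin q) (Fin q) ℝ :=
    fun x i => if h : i ∈ Finset.range n then x ⟨i, h⟩ else 1
  have hext : Measurable ext := by
    refine measurable_pi_lambda _ fun i => ?_
    dsimp only [ext]
    by_cases hi : i ∈ Finset.range n
    · simp only [dif_pos hi]
      exact measurable_pi_apply _
    · simp only [dif_neg hi]
      exact measurable_const
  let g : (∀ _ : (Finset.range n : Finset ℕ), Matrix (Fin q) (Fin q) ℝ) →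
      Matrix (Fin q) (Fin q) ℝ := fun x => ((List.range n).map (ext x)).prod
  let g2 : (∀ _ : ({n} : Finset ℕ), Matrix (Fin q) (Fin q) ℝ) → Matrix (Fin q) (Fin q) ℝ :=
    fun x => x ⟨n, Finset.mem_singleton_self n⟩
  have hg : Measurable g := (measurable_listprod n).comp hext
  have hg2 : Measurable g2 := measurable_pi_apply _
  have h2 := h.comp hg hg2
  have e1 : (g ∘ fun ω (i : (Finset.range n : Finset ℕ)) => A i ω) = matProd A n := by
    funext ω
    show ((List.range n).map (ext fun i : (Finset.range n : Finset ℕ) => A i ω)).prod = _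
    unfold matProd
    congr 1
    refine List.map_congr_left fun a ha => ?_
    have haa : a ∈ Finset.range n := Finset.mem_range.mpr (List.mem_range.mp ha)
    exact dif_pos haa
  have e2 : (g2 ∘ fun ω (i : ({n} : Finset ℕ)) => A i ω) = A n := rfl
  rwa [e1, e2] at h2

end Aux

attribute [local instance] Matrix.linftyOpNormedAddCommGroup Matrix.linftyOpNormedRing Matrix.linftyOpNormedAlgebra

lemma entry_norm_le_linftyOpNorm {ι κ : Type*} [Fintype ι] [Fintype κ] (X : Matrix ι κ ℂ) (i : ι) (j : κ) :
    ‖X i j‖ ≤ ‖X‖ := by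
  rw [Matrix.linfty_opNorm_def]
  calc ‖X i j‖ ≤ ((∑ j', ‖X i j'‖₊ : NNReal) : ℝ) := by
        push_cast
        exact Finset.single_le_sum (fun _ _ => norm_nonneg _) (Finset.mem_univ j)
    _ ≤ _ := by
        exact_mod_cast Finset.le_sup (f := fun i => ∑ j', ‖X i j'‖₊) (Finset.mem_univ i)

/-- If `A_1, A_2, …` are i.i.d. random `q×q` matrices such that all eigenvalues of
`E(A_1 ⊗ A_1)` (Kronecker product) have modulus less than one, then
`E‖A_1⋯A_n‖² ≤ c e^{−γn}` for some constants `c, γ > 0`. -/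
theorem second_moment_products_geometric_decay
    {Ω : Type*} [MeasurableSpace Ω] (P : Measure Ω) [IsProbabilityMeasure P]
    {q : ℕ} (A : ℕ → Ω → Matrix (Fin q) (Fin q) ℝ)
    (hmeas : ∀ i, Measurable (A i))
    (hindep : iIndepFun A P)
    (hident : ∀ i, IdentDistrib (A i) (A 0) P P)
    (hint : ∀ i j, Integrable (fun ω => (A 0 ω ⊗ₖ A 0 ω) i j) P)
    (hspec : ∀ μ ∈ spectrum ℂ
        ((Matrix.of (fun i j => ∫ ω, (A 0 ω ⊗ₖ A 0 ω) i j ∂P)).map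
          (algebraMap ℝ ℂ)),
      ‖μ‖ < 1) :
    ∃ c > (0 : ℝ), ∃ γ > (0 : ℝ), ∀ n : ℕ,
      ∫ ω, frobNorm (matProd A n ω) ^ 2 ∂P ≤ c * Real.exp (-γ * n) := by
  classical
  rcases Nat.eq_zero_or_pos q with hq | hq
  · refine ⟨1, one_pos, 1, one_pos, fun n => ?_⟩
    subst hq
    have h0 : (fun ω => frobNorm (matProd A n ω) ^ 2) = fun _ => (0 : ℝ) := by
      funext ω; simp [frobNorm]
    rw [h0, integral_zero]
    positivity
  haveI : Nonempty (Fin q) := ⟨⟨0, hq⟩⟩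
  set M : Matrix (Fin q × Fin q) (Fin q × Fin q) ℝ :=
    Matrix.of (fun i j => ∫ ω, (A 0 ω ⊗ₖ A 0 ω) i j ∂P) with hM
  have key : ∀ n : ℕ,
      (∀ i j, Integrable (fun ω => (matProd A n ω ⊗ₖ matProd A n ω) i j) P) ∧
      (∀ i j, ∫ ω, (matProd A n ω ⊗ₖ matProd A n ω) i j ∂P = (M ^ n) i j) := by
    intro n
    induction n with
    | zero =>
        constructor <;> intro i j <;>
          · simp only [matProd_zero, Matrix.one_kronecker_one, pow_zero]
            first
            | exact integrable_const _
            | simp [integral_const]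
    | succ n ih =>
        have hAY : ∀ k j, IdentDistrib (fun ω => (A n ω ⊗ₖ A n ω) k j)
            (fun ω => (A 0 ω ⊗ₖ A 0 ω) k j) P P := by
          intro k j
          have hu : Measurable fun B : Matrix (Fin q) (Fin q) ℝ => (B ⊗ₖ B) k j := by
            have h : (fun B : Matrix (Fin q) (Fin q) ℝ => (B ⊗ₖ B) k j)
                = fun B => B k.1 j.1 * B k.2 j.2 := by
              funext B; simp [Matrix.kroneckerMap_apply]
            rw [h]
            exact (measurable_matrix_entry measurable_id _ _).mul
              (measurable_matrix_entry measurable_id _ _)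
          exact (hident n).comp hu
        have hYint : ∀ k j, Integrable (fun ω => (A n ω ⊗ₖ A n ω) k j) P :=
          fun k j => (hAY k j).integrable_iff.mpr (hint k j)
        have hYavg : ∀ k j, ∫ ω, (A n ω ⊗ₖ A n ω) k j ∂P = M k j :=
          fun k j => (hAY k j).integral_eq
        have hIF : IndepFun (fun ω => matProd A n ω ⊗ₖ matProd A n ω)
            (fun ω => A n ω ⊗ₖ A n ω) P :=
          (indepFun_matProd A hmeas hindep n).comp measurable_kron_self measurable_kron_self
        have hIFe : ∀ i k k' j, IndepFun (fun ω => (matProd A n ω ⊗ₖ matProd A n ω) i k)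
            (fun ω => (A n ω ⊗ₖ A n ω) k' j) P :=
          fun i k k' j => hIF.comp (measurable_matrix_entry measurable_id i k)
            (measurable_matrix_entry measurable_id k' j)
        have hprod_int : ∀ i j k, Integrable
            (fun ω => (matProd A n ω ⊗ₖ matProd A n ω) i k * (A n ω ⊗ₖ A n ω) k j) P :=
          fun i j k => (hIFe i k k j).integrable_mul (ih.1 i k) (hYint k j)
        have hexp : ∀ i j, (fun ω => (matProd A (n+1) ω ⊗ₖ matProd A (n+1) ω) i j)
            = fun ω => ∑ k, (matProd A n ω ⊗ₖ matProd A n ω) i k * (A n ω ⊗ₖ A n ω) k j := by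
          intro i j; funext ω
          rw [matProd_succ, Matrix.mul_kronecker_mul, Matrix.mul_apply]
        constructor
        · intro i j
          rw [hexp i j]
          exact integrable_finset_sum _ fun k _ => hprod_int i j k
        · intro i j
          rw [hexp i j, integral_finset_sum _ fun k _ => hprod_int i j k]
          have hterm : ∀ k, ∫ ω, (matProd A n ω ⊗ₖ matProd A n ω) i k
              * (A n ω ⊗ₖ A n ω) k j ∂P = (M ^ n) i k * M k j := by
            intro k
            have h := (hIFe i k k j).integral_mul_eq_mul_integral (ih.1 i k).aestronglyMeasurable (hYint k j).aestronglyMeasurable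
            rw [show ((fun ω => (matProd A n ω ⊗ₖ matProd A n ω) i k)
                * fun ω => (A n ω ⊗ₖ A n ω) k j)
              = fun ω => (matProd A n ω ⊗ₖ matProd A n ω) i k * (A n ω ⊗ₖ A n ω) k j from rfl]
              at h
            rw [h, ih.2 i k, hYavg k j]
          simp_rw [hterm]
          rw [pow_succ, Matrix.mul_apply]
  -- spectral radius estimate
  set M' : Matrix (Fin q × Fin q) (Fin q × Fin q) ℂ := M.map (algebraMap ℝ ℂ) with hM'
  haveI : CompleteSpace (Matrix (Fin q × Fin q) (Fin q × Fin q) ℂ) :=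
    FiniteDimensional.complete ℂ _
  have hρ : spectralRadius ℂ M' < 1 := by
    have h1 : spectralRadius ℂ M' < ((1 : NNReal) : ENNReal) :=
      spectrum.spectralRadius_lt_of_forall_lt M' fun z hz => by
        have h2 := hspec z hz
        exact_mod_cast h2
    simpa using h1
  obtain ⟨r₀, hρr₀, hr₀1⟩ := ENNReal.lt_iff_exists_nnreal_btwn.mp hρ
  set r : NNReal := max r₀ (1/2) with hrdef
  have hrpos : (0 : ℝ) < (r : ℝ) := by
    have h2 : (1/2 : NNReal) ≤ r := le_max_right _ _
    have h3 : (0 : NNReal) < 1/2 := by norm_num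
    exact_mod_cast lt_of_lt_of_le h3 h2
  have hr1 : (r : ℝ) < 1 := by
    have h1 : r₀ < 1 := by exact_mod_cast hr₀1
    have h2 : r < 1 := max_lt h1 (by exact_mod_cast (show ((1:ℝ))/2 < 1 by norm_num))
    exact_mod_cast h2
  have hρr : spectralRadius ℂ M' < (r : ENNReal) :=
    lt_of_lt_of_le hρr₀ (ENNReal.coe_le_coe.mpr (le_max_left _ _))
  have hG := spectrum.pow_nnnorm_pow_one_div_tendsto_nhds_spectralRadius M'
  have hev : ∀ᶠ n : ℕ in atTop,
      ((‖M' ^ n‖₊ : ENNReal) ^ (1 / (n:ℝ))) < (r : ENNReal) :=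
    hG.eventually_lt_const hρr
  obtain ⟨N, hN⟩ := eventually_atTop.mp (hev.and (eventually_ge_atTop 1))
  have hpow : ∀ n, N ≤ n → ‖M' ^ n‖ ≤ (r : ℝ) ^ n := by
    intro n hn
    obtain ⟨h1, h2⟩ := hN n hn
    have hn0 : (n : ℝ) ≠ 0 := Nat.cast_ne_zero.mpr (by omega)
    have h3 : (‖M' ^ n‖₊ : ENNReal) ≤ (r : ENNReal) ^ (n : ℝ) := by
      calc (‖M' ^ n‖₊ : ENNReal)
          = ((‖M' ^ n‖₊ : ENNReal) ^ (1/(n:ℝ))) ^ (n:ℝ) := by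
            rw [← ENNReal.rpow_mul, one_div, inv_mul_cancel₀ hn0, ENNReal.rpow_one]
        _ ≤ (r : ENNReal) ^ (n:ℝ) := ENNReal.rpow_le_rpow h1.le (Nat.cast_nonneg n)
    rw [ENNReal.rpow_natCast, ← ENNReal.coe_pow, ENNReal.coe_le_coe] at h3
    have h4 : ‖M' ^ n‖₊ ≤ r ^ n := h3
    exact_mod_cast h4
  set c₀ : ℝ := 1 + ∑ k ∈ Finset.range N, ‖M' ^ k‖ / (r : ℝ) ^ k with hc₀
  have hsum0 : 0 ≤ ∑ k ∈ Finset.range N, ‖M' ^ k‖ / (r : ℝ) ^ k :=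
    Finset.sum_nonneg fun k _ => by positivity
  have hc₀1 : 1 ≤ c₀ := by simp only [hc₀]; linarith
  have hc₀pos : 0 < c₀ := lt_of_lt_of_le zero_lt_one hc₀1
  have hbound : ∀ n, ‖M' ^ n‖ ≤ c₀ * (r : ℝ) ^ n := by
    intro n
    rcases lt_or_ge n N with h | h
    · have hle : ‖M' ^ n‖ / (r : ℝ) ^ n ≤ ∑ k ∈ Finset.range N, ‖M' ^ k‖ / (r : ℝ) ^ k :=
        Finset.single_le_sum (f := fun k => ‖M' ^ k‖ / (r : ℝ) ^ k) (fun k _ => by positivity) (Finset.mem_range.mpr h)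
      have hrn : (0:ℝ) < (r : ℝ) ^ n := by positivity
      have hle2 : ‖M' ^ n‖ / (r : ℝ) ^ n ≤ c₀ := by simp only [hc₀]; linarith
      calc ‖M' ^ n‖ = (‖M' ^ n‖ / (r : ℝ) ^ n) * (r : ℝ) ^ n := by field_simp
        _ ≤ c₀ * (r : ℝ) ^ n := mul_le_mul_of_nonneg_right hle2 hrn.le
    · calc ‖M' ^ n‖ ≤ (r : ℝ) ^ n := hpow n h
        _ ≤ c₀ * (r : ℝ) ^ n := by nlinarith [pow_pos hrpos n]
  have hentry : ∀ n (i j : Fin q × Fin q), (M ^ n) i j ≤ c₀ * (r : ℝ) ^ n := by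
    intro n i j
    have hmap : M' ^ n = (M ^ n).map (algebraMap ℝ ℂ) := by
      rw [hM', ← RingHom.mapMatrix_apply, ← RingHom.mapMatrix_apply, ← map_pow]
    calc (M ^ n) i j ≤ |(M ^ n) i j| := le_abs_self _
      _ = ‖(M' ^ n) i j‖ := by
          rw [hmap]; simp [Matrix.map_apply]
      _ ≤ ‖M' ^ n‖ := entry_norm_le_linftyOpNorm _ i j
      _ ≤ c₀ * (r : ℝ) ^ n := hbound n
  have hqpos : (0:ℝ) < (q:ℝ) := by exact_mod_cast hq
  refine ⟨(q:ℝ)^2 * c₀, by positivity, -Real.log (r : ℝ),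
    neg_pos.mpr (Real.log_neg hrpos hr1), fun n => ?_⟩
  have hrexp : (r : ℝ) ^ n = Real.exp (-(-Real.log (r : ℝ)) * n) := by
    rw [neg_neg, mul_comm, Real.exp_nat_mul, Real.exp_log hrpos]
  have hfrob : (fun ω => frobNorm (matProd A n ω) ^ 2)
      = fun ω => ∑ i, ∑ j, (matProd A n ω ⊗ₖ matProd A n ω) (i,i) (j,j) := by
    funext ω
    rw [frobNorm, Real.sq_sqrt (by positivity)]
    refine Finset.sum_congr rfl fun i _ => Finset.sum_congr rfl fun j _ => ?_
    simp [Matrix.kroneckerMap_apply, sq]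
  rw [hfrob, integral_finset_sum _ fun i _ =>
    integrable_finset_sum _ fun j _ => (key n).1 (i,i) (j,j)]
  have hsum : ∑ i : Fin q, ∫ ω, ∑ j : Fin q,
      (matProd A n ω ⊗ₖ matProd A n ω) (i,i) (j,j) ∂P
      = ∑ i : Fin q, ∑ j : Fin q, (M ^ n) (i,i) (j,j) := by
    refine Finset.sum_congr rfl fun i _ => ?_
    rw [integral_finset_sum _ fun j _ => (key n).1 (i,i) (j,j)]
    exact Finset.sum_congr rfl fun j _ => (key n).2 (i,i) (j,j)
  rw [hsum]
  calc ∑ i : Fin q, ∑ j : Fin q, (M ^ n) (i,i) (j,j)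
      ≤ ∑ _i : Fin q, ∑ _j : Fin q, c₀ * (r : ℝ) ^ n :=
        Finset.sum_le_sum fun i _ => Finset.sum_le_sum fun j _ => hentry n (i,i) (j,j)
    _ = (q:ℝ)^2 * c₀ * (r : ℝ) ^ n := by
        simp [Finset.sum_const, Finset.card_univ]; ring
    _ = (q:ℝ)^2 * c₀ * Real.exp (-(-Real.log (r : ℝ)) * n) := by rw [hrexp]
end
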